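/- Consider a tree network of Kuramoto oscillators with couplings K_e > 0 on the N−1 edges and injections P with ∑ P_j = 0, and suppose the unique flow solution F satisfies |F_e| < K_e for all edges e. Then up to a global phase shift there are exactly 2^{N−1} fixed points, obtained by choosing for each edge e the phase difference Δ_e = arcsin(F_e/K_e) or Δ_e = π − arcsin(F_e/K_e). -/

import Mathlib

open Real

lemma angle_ext_sin_cos {x y : Real.Angle} (hs : x.sin = y.sin) (hc : x.cos = y.cos) : x = y := by
  rcases Real.Angle.cos_eq_iff_eq_or_eq_neg.mp hc with h | h
  · exact h
  · subst h
    rw [Real.Angle.sin_neg] at hs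
    have h0 : y.sin = 0 := by linarith
    rcases Real.Angle.sin_eq_zero_iff.mp h0 with h1 | h1 <;>
      simp [h1, Real.Angle.neg_coe_pi]

lemma flow_unique {N : ℕ} {G : SimpleGraph (Fin N)} (htree : G.IsTree)
    (g : Fin N → Fin N → ℝ)
    (hanti : ∀ j ℓ, g j ℓ = - g ℓ j)
    (hzero : ∀ j ℓ, ¬ G.Adj j ℓ → g j ℓ = 0)
    (hcons : ∀ j, ∑ ℓ, g j ℓ = 0) :
    ∀ a b, g a b = 0 := by
  classical
  intro a b
  by_cases hab : G.Adj a b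
  · set G' := G \ SimpleGraph.fromEdgeSet {s(a, b)} with hG'
    set S : Finset (Fin N) := Finset.univ.filter (fun x => G'.Reachable a x) with hS
    have haS : a ∈ S := by
      simp only [hS, Finset.mem_filter, Finset.mem_univ, true_and]; exact SimpleGraph.Reachable.refl a
    have hbS : b ∉ S := by
      have hbridge := SimpleGraph.isAcyclic_iff_forall_adj_isBridge.mp htree.2 hab
      rw [SimpleGraph.isBridge_iff] at hbridge
      simp only [hS, Finset.mem_filter, Finset.mem_univ, true_and]
      exact hbridge
    have h1 : ∑ x ∈ S, ∑ ℓ, g x ℓ = 0 := by simp [hcons]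
    have hsplit : ∀ x, ∑ ℓ, g x ℓ = ∑ ℓ ∈ S, g x ℓ + ∑ ℓ ∈ Sᶜ, g x ℓ := by
      intro x; rw [Finset.sum_add_sum_compl]
    have hinner : ∑ x ∈ S, ∑ ℓ ∈ S, g x ℓ = 0 := by
      have : ∑ x ∈ S, ∑ ℓ ∈ S, g x ℓ = - ∑ x ∈ S, ∑ ℓ ∈ S, g x ℓ := by
        nth_rewrite 2 [Finset.sum_comm]
        rw [← Finset.sum_neg_distrib]
        refine Finset.sum_congr rfl fun x _ => ?_
        rw [← Finset.sum_neg_distrib]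
        exact Finset.sum_congr rfl fun ℓ _ => by rw [hanti x ℓ]
      linarith
    have hcross : ∑ x ∈ S, ∑ ℓ ∈ Sᶜ, g x ℓ = g a b := by
      rw [← Finset.sum_product']
      refine Finset.sum_eq_single_of_mem (a, b)
        (Finset.mem_product.mpr ⟨haS, Finset.mem_compl.mpr hbS⟩) ?_
      rintro ⟨x, ℓ⟩ hmem hne
      obtain ⟨hxS, hlS⟩ := Finset.mem_product.mp hmem
      rw [Finset.mem_compl] at hlS
      by_contra hgne
      have hadj : G.Adj x ℓ := by
        by_contra hna; exact hgne (hzero _ _ hna)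
      have hnadj' : ¬ G'.Adj x ℓ := by
        intro h'
        exact hlS (by
          simp only [hS, Finset.mem_filter, Finset.mem_univ, true_and] at hxS ⊢
          exact hxS.trans h'.reachable)
      rw [hG', SimpleGraph.sdiff_adj, SimpleGraph.fromEdgeSet_adj] at hnadj'
      push_neg at hnadj'
      have hmm := hnadj' hadj
      rw [Set.mem_singleton_iff, Sym2.eq_iff] at hmm
      rcases hmm.1 with ⟨hx, hl⟩ | ⟨hx, hl⟩
      · exact hne (Prod.ext hx hl)
      · rw [hx] at hxS; exact hbS hxS
    have := h1
    rw [Finset.sum_congr rfl (fun x _ => hsplit x), Finset.sum_add_distrib, hinner, hcross,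
      zero_add] at this
    exact this
  · exact hzero a b hab

noncomputable def pathTo {N : ℕ} {G : SimpleGraph (Fin N)} (htree : G.IsTree) (r v : Fin N) :
    G.Walk r v :=
  (htree.existsUnique_path r v).choose

lemma pathTo_isPath {N : ℕ} {G : SimpleGraph (Fin N)} (htree : G.IsTree) (r v : Fin N) :
    (pathTo htree r v).IsPath := (htree.existsUnique_path r v).choose_spec.1

lemma pathTo_unique {N : ℕ} {G : SimpleGraph (Fin N)} (htree : G.IsTree) {r v : Fin N}
    (p : G.Walk r v) (hp : p.IsPath) : pathTo htree r v = p :=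
  (((htree.existsUnique_path r v).choose_spec.2 p hp)).symm

noncomputable def dartSum {N : ℕ} {G : SimpleGraph (Fin N)} (δ : Fin N → Fin N → Real.Angle)
    {u v : Fin N} (p : G.Walk u v) : Real.Angle :=
  (p.darts.map (fun d => δ d.toProd.1 d.toProd.2)).sum

lemma dartSum_append {N : ℕ} {G : SimpleGraph (Fin N)} (δ : Fin N → Fin N → Real.Angle)
    {u v w : Fin N} (p : G.Walk u v) (q : G.Walk v w) :
    dartSum δ (p.append q) = dartSum δ p + dartSum δ q := by
  simp [dartSum, SimpleGraph.Walk.darts_append]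

lemma pathTo_self {N : ℕ} {G : SimpleGraph (Fin N)} (htree : G.IsTree) (r : Fin N) :
    pathTo htree r r = SimpleGraph.Walk.nil :=
  pathTo_unique htree _ SimpleGraph.Walk.IsPath.nil

lemma theta_step {N : ℕ} {G : SimpleGraph (Fin N)} (htree : G.IsTree)
    (δ : Fin N → Fin N → Real.Angle)
    (hδ : ∀ j ℓ, G.Adj j ℓ → δ j ℓ = - δ ℓ j) (r : Fin N) {j ℓ : Fin N} (h : G.Adj j ℓ) :
    dartSum δ (pathTo htree r ℓ) = dartSum δ (pathTo htree r j) + δ j ℓ := by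
  set p := pathTo htree r j with hp
  have hpp : p.IsPath := pathTo_isPath htree r j
  by_cases hmem : ℓ ∈ p.support
  · have htake : (p.takeUntil ℓ hmem).IsPath := hpp.takeUntil hmem
    have hq : pathTo htree r ℓ = p.takeUntil ℓ hmem := pathTo_unique htree _ htake
    have hdropP : (p.dropUntil ℓ hmem).IsPath := hpp.dropUntil hmem
    have hsingle : (SimpleGraph.Walk.cons h.symm SimpleGraph.Walk.nil : G.Walk ℓ j).IsPath := by
      simp [SimpleGraph.Walk.cons_isPath_iff, h.symm.ne]
    have hdrop : p.dropUntil ℓ hmem = SimpleGraph.Walk.cons h.symm SimpleGraph.Walk.nil := by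
      have h1 := (htree.existsUnique_path ℓ j).unique hdropP hsingle
      exact h1
    have hspec := p.take_spec hmem
    have : dartSum δ p = dartSum δ (p.takeUntil ℓ hmem) + δ ℓ j := by
      conv_lhs => rw [← hspec]
      rw [dartSum_append, hdrop]
      simp [dartSum]
    rw [hq, this, hδ j ℓ h]
    abel
  · have hconcat : (p.concat h).IsPath := by
      rw [← SimpleGraph.Walk.isPath_reverse_iff]
      rw [SimpleGraph.Walk.reverse_concat]
      rw [SimpleGraph.Walk.cons_isPath_iff]
      refine ⟨(SimpleGraph.Walk.isPath_reverse_iff p).mpr hpp, ?_⟩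
      simpa using hmem
    have hq : pathTo htree r ℓ = p.concat h := pathTo_unique htree _ hconcat
    rw [hq]
    simp [dartSum, SimpleGraph.Walk.darts_concat]

lemma theta_eq_of_diff_eq {N : ℕ} {G : SimpleGraph (Fin N)} (hconn : G.Connected)
    (θ θ' : Fin N → Real.Angle) (r : Fin N) (hr : θ r = θ' r)
    (hd : ∀ j ℓ, G.Adj j ℓ → θ ℓ - θ j = θ' ℓ - θ' j) : θ = θ' := by
  have key : ∀ {u v : Fin N} (_ : G.Walk u v), θ u = θ' u → θ v = θ' v := by
    intro u v p
    induction p with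
    | nil => exact id
    | @cons u w v h q ih =>
      intro hu
      refine ih ?_
      have hduw := hd u w h
      rw [hu] at hduw
      exact sub_left_injective hduw
  funext v
  obtain ⟨p⟩ := hconn.preconnected r v
  exact key p hr

theorem tree_fixed_point_count (N : ℕ) (hN : 0 < N) (G : SimpleGraph (Fin N))
    (htree : G.IsTree)
    (K : Matrix (Fin N) (Fin N) ℝ)
    (hKsymm : ∀ j ℓ, K j ℓ = K ℓ j)
    (hKpos : ∀ j ℓ, G.Adj j ℓ → 0 < K j ℓ)
    (hKzero : ∀ j ℓ, ¬G.Adj j ℓ → K j ℓ = 0)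
    (P : Fin N → ℝ) (hP : ∑ j, P j = 0)
    (F : Fin N → Fin N → ℝ)
    (hFanti : ∀ j ℓ, F j ℓ = -F ℓ j)
    (hFcons : ∀ j, P j + ∑ ℓ, F j ℓ = 0)
    (hFzero : ∀ j ℓ, ¬G.Adj j ℓ → F j ℓ = 0)
    (hFlt : ∀ j ℓ, G.Adj j ℓ → |F j ℓ| < K j ℓ) :
    {θ : Fin N → Real.Angle | θ ⟨0, hN⟩ = 0 ∧
        ∀ j, P j + ∑ ℓ, K j ℓ * Real.Angle.sin (θ ℓ - θ j) = 0}.ncard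
      = 2 ^ (N - 1) := by
  classical
  set r : Fin N := ⟨0, hN⟩ with hr
  set S : Set (Fin N → Real.Angle) := {θ : Fin N → Real.Angle | θ r = 0 ∧
        ∀ j, P j + ∑ ℓ, K j ℓ * Real.Angle.sin (θ ℓ - θ j) = 0} with hSdef
  -- basic facts
  have hKne : ∀ j ℓ, G.Adj j ℓ → K j ℓ ≠ 0 := fun j ℓ h => ne_of_gt (hKpos j ℓ h)
  have hratio : ∀ j ℓ, G.Adj j ℓ → |F j ℓ / K j ℓ| < 1 := by
    intro j ℓ h
    rw [abs_div, abs_of_pos (hKpos j ℓ h), div_lt_one (hKpos j ℓ h)]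
    exact hFlt j ℓ h
  -- the sign map
  have hcossymm : ∀ (θ : Fin N → Real.Angle) (j ℓ : Fin N),
      (decide (0 ≤ Real.Angle.cos (θ j - θ ℓ))) = decide (0 ≤ Real.Angle.cos (θ ℓ - θ j)) := by
    intro θ j ℓ
    have : Real.Angle.cos (θ j - θ ℓ) = Real.Angle.cos (θ ℓ - θ j) := by
      rw [← Real.Angle.cos_neg, neg_sub]
    rw [this]
  set σ : (Fin N → Real.Angle) → (↥G.edgeSet → Bool) := fun θ e =>
    Sym2.lift ⟨fun j ℓ => decide (0 ≤ Real.Angle.cos (θ j - θ ℓ)), hcossymm θ⟩ e.val with hσ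
  -- any fixed point realizes the flow F
  have hflow : ∀ θ ∈ S, ∀ j ℓ, K j ℓ * Real.Angle.sin (θ ℓ - θ j) = F j ℓ := by
    intro θ hθ j ℓ
    have hz := flow_unique htree (fun j ℓ => K j ℓ * Real.Angle.sin (θ ℓ - θ j) - F j ℓ)
      (by
        intro j ℓ
        have : Real.Angle.sin (θ j - θ ℓ) = - Real.Angle.sin (θ ℓ - θ j) := by
          rw [← Real.Angle.sin_neg, neg_sub]
        simp only [this, hKsymm j ℓ, hFanti j ℓ]
        ring)
      (by intro j ℓ h; simp [hKzero j ℓ h, hFzero j ℓ h])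
      (by
        intro j
        rw [Finset.sum_sub_distrib]
        have h1 := hθ.2 j
        have h2 := hFcons j
        linarith) j ℓ
    linarith [hz]
  have hsin_mem : ∀ θ ∈ S, ∀ j ℓ, G.Adj j ℓ →
      Real.Angle.sin (θ ℓ - θ j) = F j ℓ / K j ℓ := by
    intro θ hθ j ℓ h
    field_simp [hKne j ℓ h]
    rw [mul_comm]
    exact hflow θ hθ j ℓ
  -- injectivity of σ on S
  have hinj : ∀ θ ∈ S, ∀ θ' ∈ S, σ θ = σ θ' → θ = θ' := by
    intro θ hθ θ' hθ' hσeq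
    refine theta_eq_of_diff_eq htree.1 θ θ' r (hθ.1.trans hθ'.1.symm) ?_
    intro j ℓ h
    have hs : Real.Angle.sin (θ ℓ - θ j) = Real.Angle.sin (θ' ℓ - θ' j) := by
      rw [hsin_mem θ hθ j ℓ h, hsin_mem θ' hθ' j ℓ h]
    have hcos2 : Real.Angle.cos (θ ℓ - θ j) ^ 2 = Real.Angle.cos (θ' ℓ - θ' j) ^ 2 := by
      have a1 := Real.Angle.cos_sq_add_sin_sq (θ ℓ - θ j)
      have a2 := Real.Angle.cos_sq_add_sin_sq (θ' ℓ - θ' j)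
      rw [hs] at a1
      linarith
    have hcosne : Real.Angle.cos (θ ℓ - θ j) ≠ 0 := by
      have a1 := Real.Angle.cos_sq_add_sin_sq (θ ℓ - θ j)
      rw [hsin_mem θ hθ j ℓ h] at a1
      have : (F j ℓ / K j ℓ) ^ 2 < 1 := by
        have := hratio j ℓ h
        nlinarith [abs_nonneg (F j ℓ / K j ℓ), sq_abs (F j ℓ / K j ℓ)]
      intro h0
      rw [h0] at a1
      nlinarith
    have hcosne' : Real.Angle.cos (θ' ℓ - θ' j) ≠ 0 := by
      intro h0
      rw [h0] at hcos2
      exact hcosne (by nlinarith)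
    have hsign : (0 ≤ Real.Angle.cos (θ ℓ - θ j)) ↔ (0 ≤ Real.Angle.cos (θ' ℓ - θ' j)) := by
      have := congrFun hσeq ⟨s(j, ℓ), h⟩
      simp only [hσ, Sym2.lift_mk] at this
      rw [hcossymm θ j ℓ, hcossymm θ' j ℓ] at this
      exact decide_eq_decide.mp this
    have hc : Real.Angle.cos (θ ℓ - θ j) = Real.Angle.cos (θ' ℓ - θ' j) := by
      have hfac : (Real.Angle.cos (θ ℓ - θ j) - Real.Angle.cos (θ' ℓ - θ' j)) *
          (Real.Angle.cos (θ ℓ - θ j) + Real.Angle.cos (θ' ℓ - θ' j)) = 0 := by nlinarith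
      rcases mul_eq_zero.mp hfac with h1 | h1
      · linarith
      · exfalso
        rcases le_or_gt 0 (Real.Angle.cos (θ ℓ - θ j)) with h2 | h2
        · have h3 := hsign.mp h2
          have : Real.Angle.cos (θ ℓ - θ j) = 0 := by linarith
          exact hcosne this
        · have h3 := hsign.not.mp (not_le.mpr h2)
          push_neg at h3
          linarith
    exact angle_ext_sin_cos hs hc
  -- surjectivity
  have hsurj : ∀ t : ↥G.edgeSet → Bool, ∃ θ ∈ S, σ θ = t := by
    intro t
    set δ : Fin N → Fin N → Real.Angle := fun j ℓ =>
      if h : G.Adj j ℓ then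
        (if t ⟨s(j, ℓ), h⟩ then ((Real.arcsin (F j ℓ / K j ℓ) : ℝ) : Real.Angle)
         else ((π - Real.arcsin (F j ℓ / K j ℓ) : ℝ) : Real.Angle)) else 0 with hδ
    have hmem_bounds : ∀ j ℓ, G.Adj j ℓ → -1 ≤ F j ℓ / K j ℓ ∧ F j ℓ / K j ℓ ≤ 1 := by
      intro j ℓ h
      have := hratio j ℓ h
      rw [abs_lt] at this
      constructor <;> linarith
    have htswap : ∀ (j ℓ : Fin N) (h : G.Adj j ℓ),
        (⟨s(ℓ, j), h.symm⟩ : ↥G.edgeSet) = ⟨s(j, ℓ), h⟩ :=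
      fun j ℓ h => Subtype.ext (Sym2.eq_swap)
    have hδanti : ∀ j ℓ, G.Adj j ℓ → δ j ℓ = - δ ℓ j := by
      intro j ℓ h
      rw [hδ]
      simp only [dif_pos h, dif_pos h.symm, htswap j ℓ h]
      have hF : F ℓ j / K ℓ j = -(F j ℓ / K j ℓ) := by
        rw [hFanti ℓ j, hKsymm ℓ j]; ring
      by_cases ht : t ⟨s(j, ℓ), h⟩
      · rw [if_pos ht, if_pos ht, hF, Real.arcsin_neg]
        rw [Real.Angle.coe_neg, neg_neg]
      · rw [if_neg ht, if_neg ht, hF, Real.arcsin_neg]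
        rw [← Real.Angle.coe_neg]
        rw [Real.Angle.angle_eq_iff_two_pi_dvd_sub]
        exact ⟨1, by ring⟩
    have hδsin : ∀ j ℓ, G.Adj j ℓ → Real.Angle.sin (δ j ℓ) = F j ℓ / K j ℓ := by
      intro j ℓ h
      obtain ⟨hb1, hb2⟩ := hmem_bounds j ℓ h
      rw [hδ]
      simp only [dif_pos h]
      by_cases ht : t ⟨s(j, ℓ), h⟩
      · rw [if_pos ht, Real.Angle.sin_coe, Real.sin_arcsin hb1 hb2]
      · rw [if_neg ht, Real.Angle.sin_coe, Real.sin_pi_sub, Real.sin_arcsin hb1 hb2]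
    have hδcos : ∀ j ℓ (h : G.Adj j ℓ),
        if t ⟨s(j, ℓ), h⟩ then 0 < Real.Angle.cos (δ j ℓ) else Real.Angle.cos (δ j ℓ) < 0 := by
      intro j ℓ h
      have hsq : (F j ℓ / K j ℓ) ^ 2 < 1 := by
        have := hratio j ℓ h
        nlinarith [abs_nonneg (F j ℓ / K j ℓ), sq_abs (F j ℓ / K j ℓ)]
      have hpos : 0 < Real.sqrt (1 - (F j ℓ / K j ℓ) ^ 2) := Real.sqrt_pos.mpr (by linarith)
      rw [hδ]
      simp only [dif_pos h]
      by_cases ht : t ⟨s(j, ℓ), h⟩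
      · rw [if_pos ht, if_pos ht, Real.Angle.cos_coe, Real.cos_arcsin]
        exact hpos
      · rw [if_neg ht, if_neg ht, Real.Angle.cos_coe, Real.cos_pi_sub, Real.cos_arcsin]
        linarith
    set θ : Fin N → Real.Angle := fun v => dartSum δ (pathTo htree r v) with hθdef
    have hθr : θ r = 0 := by
      rw [hθdef]
      simp [pathTo_self htree r, dartSum]
    have hstep : ∀ j ℓ, G.Adj j ℓ → θ ℓ - θ j = δ j ℓ := by
      intro j ℓ h
      rw [hθdef]
      simp only []
      rw [theta_step htree δ hδanti r h]
      abel
    refine ⟨θ, ⟨hθr, ?_⟩, ?_⟩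
    · intro j
      have : ∀ ℓ, K j ℓ * Real.Angle.sin (θ ℓ - θ j) = F j ℓ := by
        intro ℓ
        by_cases h : G.Adj j ℓ
        · rw [hstep j ℓ h, hδsin j ℓ h, mul_div_cancel₀ _ (hKne j ℓ h)]
        · rw [hKzero j ℓ h, hFzero j ℓ h, zero_mul]
      rw [Finset.sum_congr rfl (fun ℓ _ => this ℓ)]
      exact hFcons j
    · funext e
      obtain ⟨e, he⟩ := e
      revert he
      refine Sym2.ind (fun j ℓ => ?_) e
      intro he
      have h : G.Adj j ℓ := he
      simp only [hσ, Sym2.lift_mk]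
      have h1 : θ j - θ ℓ = δ ℓ j := hstep ℓ j h.symm
      rw [h1]
      have h2 := hδcos ℓ j h.symm
      rw [htswap j ℓ h] at h2
      show decide (0 ≤ (δ ℓ j).cos) = t ⟨s(j, ℓ), h⟩
      by_cases ht : t ⟨s(j, ℓ), h⟩ = true
      · rw [if_pos ht] at h2
        rw [ht]
        exact decide_eq_true (le_of_lt h2)
      · rw [if_neg ht] at h2
        rw [Bool.not_eq_true] at ht
        rw [ht]
        exact decide_eq_false (not_le.mpr h2)
  -- counting
  have hbij : Function.Bijective (fun x : ↥S => σ x.val) := by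
    constructor
    · rintro ⟨θ1, h1⟩ ⟨θ2, h2⟩ hEq
      exact Subtype.ext (hinj θ1 h1 θ2 h2 hEq)
    · intro t
      obtain ⟨θ, hθS, hθt⟩ := hsurj t
      exact ⟨⟨θ, hθS⟩, hθt⟩
  have hedge : Fintype.card ↥G.edgeSet = N - 1 := by
    have h1 := htree.card_edgeFinset
    rw [SimpleGraph.edgeFinset_card] at h1
    rw [Fintype.card_fin] at h1
    omega
  rw [← Nat.card_coe_set_eq, Nat.card_congr (Equiv.ofBijective _ hbij),
    Nat.card_eq_fintype_card, Fintype.card_fun, Fintype.card_bool, hedge]
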